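/- Let a, a' ∈ F and b, b' ∈ F^×. Set n = [1,a] ⊥ b·[1,a] (the norm form of the quaternion algebra [a,b)), n' = [1,a'] ⊥ b'·[1,a'] (the norm form of [a',b')), and n'⁰ = ⟨1⟩ ⊥ b'·[1,a'] (the restriction of the norm form of [a',b') to pure quaternions). Suppose μ ∈ F^× is represented by the Albert form [1, a+a'] ⊥ b·[1,a] ⊥ b'·[1,a'], and that n' ⊥ μ·n' is hyperbolic (i.e. isometric to 4×ℍ). Then there exists c ∈ F^× that is represented by both μ·n and n'⁰. -/

import Mathlib

/-- The binary quadratic form `[b₁,b₂] : (x,y) ↦ b₁x² + xy + b₂y²` on `F × F`. -/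
def binQF (F : Type*) [Field F] (b₁ b₂ : F) : QuadraticForm F (F × F) :=
  LinearMap.BilinMap.toQuadraticMap (LinearMap.mk₂ F
    (fun p q : F × F => b₁ * (p.1 * q.1) + p.1 * q.2 + b₂ * (p.2 * q.2))
    (fun p p' q => by simp only [Prod.fst_add, Prod.snd_add]; ring)
    (fun a p q => by simp only [Prod.smul_fst, Prod.smul_snd, smul_eq_mul]; ring)
    (fun p q q' => by simp only [Prod.fst_add, Prod.snd_add]; ring)
    (fun a p q => by simp only [Prod.smul_fst, Prod.smul_snd, smul_eq_mul]; ring))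

section Helpers

variable {F : Type*} [Field F]

lemma smulQF_apply {M : Type*} [AddCommGroup M] [Module F M] (c : F)
    (Q : QuadraticMap F M F) (p : M) : (c • Q) p = c * Q p := rfl

lemma binQF_apply (b₁ b₂ : F) (p : F × F) :
    binQF F b₁ b₂ p = b₁ * p.1 ^ 2 + p.1 * p.2 + b₂ * p.2 ^ 2 := by
  simp [binQF, LinearMap.BilinMap.toQuadraticMap_apply]; ring

lemma Qn_apply (aa bb : F) (p : (F × F) × (F × F)) :
    ((binQF F 1 aa).prod (bb • binQF F 1 aa)) p
      = (p.1.1 ^ 2 + p.1.1 * p.1.2 + aa * p.1.2 ^ 2)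
        + bb * (p.2.1 ^ 2 + p.2.1 * p.2.2 + aa * p.2.2 ^ 2) := by
  simp only [QuadraticMap.prod_apply, smulQF_apply, binQF_apply]; ring

lemma Q0_apply (aa bb : F) (p : F × (F × F)) :
    ((QuadraticMap.sq : QuadraticForm F F).prod (bb • binQF F 1 aa)) p
      = p.1 ^ 2 + bb * (p.2.1 ^ 2 + p.2.1 * p.2.2 + aa * p.2.2 ^ 2) := by
  simp only [QuadraticMap.prod_apply, smulQF_apply, binQF_apply, QuadraticMap.sq_apply]; ring

lemma Alb_apply (a a' b b' : F) (v : (F × F) × ((F × F) × (F × F))) :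
    ((binQF F 1 (a + a')).prod ((b • binQF F 1 a).prod (b' • binQF F 1 a'))) v
      = (v.1.1^2 + v.1.1*v.1.2 + (a+a')*v.1.2^2)
        + (b*(v.2.1.1^2 + v.2.1.1*v.2.1.2 + a*v.2.1.2^2)
          + b'*(v.2.2.1^2 + v.2.2.1*v.2.2.2 + a'*v.2.2.2^2)) := by
  simp only [QuadraticMap.prod_apply, smulQF_apply, binQF_apply]; ring

lemma solve_linear (S B N lam : F) (hS : S = 0) (hB : B ≠ 0) :
    ∃ x : F, x ^ 2 * S + x * B + N = lam := by
  refine ⟨(lam - N) / B, ?_⟩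
  rw [hS]
  field_simp
  ring

end Helpers

section CharTwoHelpers

variable {F : Type*} [Field F] [CharP F 2]

lemma expand4S (a b p1 p2 p3 p4 q1 q2 q3 q4 x y : F) :
    ((x*p1+y*q1)^2 + (x*p1+y*q1)*(x*p2+y*q2) + a*(x*p2+y*q2)^2
      + b*((x*p3+y*q3)^2 + (x*p3+y*q3)*(x*p4+y*q4) + a*(x*p4+y*q4)^2))
    = x^2*(p1^2+p1*p2+a*p2^2 + b*(p3^2+p3*p4+a*p4^2))
      + x*y*(p1*q2+p2*q1+b*(p3*q4+p4*q3))
      + y^2*(q1^2+q1*q2+a*q2^2 + b*(q3^2+q3*q4+a*q4^2)) := by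
  have h2 : (2 : F) = 0 := CharTwo.two_eq_zero
  linear_combination (x*y*(p1*q1 + a*p2*q2 + b*(p3*q3 + a*p4*q4)))*h2

lemma expand3S (a b q1 q2 q3 e1 e2 e3 x y : F) :
    ((x*q1+y*e1)^2 + b*((x*q2+y*e2)^2 + (x*q2+y*e2)*(x*q3+y*e3) + a*(x*q3+y*e3)^2))
    = x^2*(q1^2 + b*(q2^2+q2*q3+a*q3^2)) + x*y*(b*(q2*e3+q3*e2))
      + y^2*(e1^2 + b*(e2^2+e2*e3+a*e3^2)) := by
  have h2 : (2 : F) = 0 := CharTwo.two_eq_zero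
  linear_combination (x*y*(q1*e1 + b*(q2*e2 + a*q3*e3)))*h2

lemma N1mult (a g h g' h' : F) :
    (g^2+g*h+a*h^2) * (g'^2+g'*h'+a*h'^2)
      = (g*g'+a*h*h')^2 + (g*g'+a*h*h')*(g*h'+h*g'+h*h') + a*(g*h'+h*g'+h*h')^2 := by
  have h2 : (2 : F) = 0 := CharTwo.two_eq_zero
  linear_combination (-(a*h*h')*(2*g*g' + g*h' + g'*h + h*h'))*h2

lemma univQnS (a b : F) (hb : b ≠ 0) (p1 p2 p3 p4 : F)
    (hnz : ¬(p1 = 0 ∧ p2 = 0 ∧ p3 = 0 ∧ p4 = 0))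
    (h0 : p1^2+p1*p2+a*p2^2 + b*(p3^2+p3*p4+a*p4^2) = 0) (lam : F) :
    ∃ q1 q2 q3 q4 : F, q1^2+q1*q2+a*q2^2 + b*(q3^2+q3*q4+a*q4^2) = lam := by
  by_cases h1 : p2 ≠ 0
  · obtain ⟨x, hx⟩ := solve_linear _ p2 ((1:F)^2+1*0+a*0^2 + b*(0^2+0*0+a*0^2)) lam h0 h1
    exact ⟨x*p1+1*1, x*p2+1*0, x*p3+1*0, x*p4+1*0, by
      linear_combination (expand4S a b p1 p2 p3 p4 1 0 0 0 x 1) + hx⟩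
  by_cases h2 : p1 ≠ 0
  · obtain ⟨x, hx⟩ := solve_linear _ p1 ((0:F)^2+0*1+a*1^2 + b*(0^2+0*0+a*0^2)) lam h0 h2
    exact ⟨x*p1+1*0, x*p2+1*1, x*p3+1*0, x*p4+1*0, by
      linear_combination (expand4S a b p1 p2 p3 p4 0 1 0 0 x 1) + hx⟩
  by_cases h3 : p4 ≠ 0
  · obtain ⟨x, hx⟩ := solve_linear _ (b*p4) ((0:F)^2+0*0+a*0^2 + b*(1^2+1*0+a*0^2)) lam h0
      (mul_ne_zero hb h3)
    exact ⟨x*p1+1*0, x*p2+1*0, x*p3+1*1, x*p4+1*0, by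
      linear_combination (expand4S a b p1 p2 p3 p4 0 0 1 0 x 1) + hx⟩
  by_cases h4 : p3 ≠ 0
  · obtain ⟨x, hx⟩ := solve_linear _ (b*p3) ((0:F)^2+0*0+a*0^2 + b*(0^2+0*1+a*1^2)) lam h0
      (mul_ne_zero hb h4)
    exact ⟨x*p1+1*0, x*p2+1*0, x*p3+1*0, x*p4+1*1, by
      linear_combination (expand4S a b p1 p2 p3 p4 0 0 0 1 x 1) + hx⟩
  push_neg at h1 h2 h3 h4
  exact absurd ⟨h2, h1, h4, h3⟩ hnz

lemma univQ0S (a b : F) (hb : b ≠ 0) (q1 q2 q3 : F)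
    (hnz : ¬(q1 = 0 ∧ q2 = 0 ∧ q3 = 0))
    (h0 : q1^2 + b*(q2^2+q2*q3+a*q3^2) = 0) (lam : F) :
    ∃ e1 e2 e3 : F, e1^2 + b*(e2^2+e2*e3+a*e3^2) = lam := by
  by_cases h3 : q3 ≠ 0
  · obtain ⟨x, hx⟩ := solve_linear _ (b*q3) ((0:F)^2 + b*(1^2+1*0+a*0^2)) lam h0
      (mul_ne_zero hb h3)
    exact ⟨x*q1+1*0, x*q2+1*1, x*q3+1*0, by
      linear_combination (expand3S a b q1 q2 q3 0 1 0 x 1) + hx⟩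
  by_cases h2 : q2 ≠ 0
  · obtain ⟨x, hx⟩ := solve_linear _ (b*q2) ((0:F)^2 + b*(0^2+0*1+a*1^2)) lam h0
      (mul_ne_zero hb h2)
    exact ⟨x*q1+1*0, x*q2+1*0, x*q3+1*1, by
      linear_combination (expand3S a b q1 q2 q3 0 0 1 x 1) + hx⟩
  push_neg at h2 h3
  subst h2; subst h3
  have hq1 : q1 = 0 := by
    have : q1 ^ 2 = 0 := by linear_combination h0
    exact pow_eq_zero_iff (by norm_num) |>.mp this
  exact absurd ⟨hq1, rfl, rfl⟩ hnz

end CharTwoHelpers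


section CharTwoHelpers2
variable {F : Type*} [Field F] [CharP F 2]

lemma pairUniv (a' b' mu : F) (hb' : b' ≠ 0) (g h : F) (hh : h ≠ 0)
    (hN : g^2 + g*h + a'*h^2 = 0) : ∃ u v : F, b'*(u^2 + u*v + a'*v^2) = mu := by
  have h2 : (2 : F) = 0 := CharTwo.two_eq_zero
  have hk : h * h⁻¹ = 1 := mul_inv_cancel₀ hh
  have hj : b' * b'⁻¹ = 1 := mul_inv_cancel₀ hb'
  refine ⟨mu*b'⁻¹ + (g*h⁻¹)*(mu*b'⁻¹+1), mu*b'⁻¹+1, ?_⟩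
  set k := h⁻¹
  set j := b'⁻¹
  linear_combination ((-1)*a'*b' + (-1)*a'*b'*h*k + (-1)*a'*h*j*k*mu^2 + (-2)*a'*h*k*mu
      + (-1)*a'*j*mu^2 + (-2)*a'*mu + (-1)*b'*g*k + (-1)*g*j*k*mu^2 + (-2)*g*k*mu)*hk
    + (a'*j*mu^2 + (2)*a'*mu + g^2*j*k^2*mu^2 + (2)*g^2*k^2*mu + (3)*g*j*k*mu^2 + (4)*g*k*mu
      + (2)*j*mu^2 + mu)*hj
    + (b'*k^2 + j*k^2*mu^2 + (2)*k^2*mu)*hN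
    + (g*j*k*mu^2 + g*k*mu + j*mu^2)*h2

lemma casePmain (a' b' mu : F) (hb' : b' ≠ 0) (p1 p2 p3 p4 : F)
    (hnz : ¬(p1 = 0 ∧ p2 = 0 ∧ p3 = 0 ∧ p4 = 0))
    (hiso : p1^2+p1*p2+a'*p2^2 + b'*(p3^2+p3*p4+a'*p4^2) = 0) :
    ∃ s u v : F, s^2 + b'*(u^2 + u*v + a'*v^2) = mu := by
  have h2 : (2 : F) = 0 := CharTwo.two_eq_zero
  by_cases hd0 : p1^2+p1*p2+a'*p2^2 = 0
  · have h34 : p3^2+p3*p4+a'*p4^2 = 0 := by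
      have hbz : b'*(p3^2+p3*p4+a'*p4^2) = 0 := by linear_combination hiso - hd0
      rcases mul_eq_zero.mp hbz with h | h
      · exact absurd h hb'
      · exact h
    by_cases hp2 : p2 = 0
    · by_cases hp4 : p4 = 0
      · have hp1 : p1 = 0 := by
          have : p1^2 = 0 := by linear_combination hd0 - (p1 + a'*p2)*hp2
          exact pow_eq_zero_iff two_ne_zero |>.mp this
        have hp3 : p3 = 0 := by
          have : p3^2 = 0 := by linear_combination h34 - (p3 + a'*p4)*hp4
          exact pow_eq_zero_iff two_ne_zero |>.mp this
        exact absurd ⟨hp1, hp2, hp3, hp4⟩ hnz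
      · obtain ⟨u, v, huv⟩ := pairUniv a' b' mu hb' p3 p4 hp4 h34
        exact ⟨0, u, v, by linear_combination huv⟩
    · obtain ⟨u, v, huv⟩ := pairUniv a' b' mu hb' p1 p2 hp2 hd0
      exact ⟨0, u, v, by linear_combination huv⟩
  · obtain ⟨d, hd⟩ : ∃ d : F, p1^2+p1*p2+a'*p2^2 = d := ⟨_, rfl⟩
    have hdne : d ≠ 0 := fun h => hd0 (by rw [hd, h])
    have hdi : d * d⁻¹ = 1 := mul_inv_cancel₀ hdne
    obtain ⟨i, hdi⟩ : ∃ i : F, d * i = 1 := ⟨d⁻¹, hdi⟩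
    refine ⟨mu + a',
      (((mu+a')*p3 + a'*p4)*p1 + a'*((mu+a')*p4 + p3 + p4)*p2)*i,
      (((mu+a')*p3 + a'*p4)*p2 + ((mu+a')*p4 + p3 + p4)*p1 + ((mu+a')*p4 + p3 + p4)*p2)*i, ?_⟩
    linear_combination
      (a'^3*i^2*p2^2 + (2)*a'^2*i^2*mu*p2^2 + a'^2*i^2*p1^2 + (5)*a'^2*i^2*p1*p2
        + (4)*a'^2*i^2*p2^2 + a'*i^2*mu^2*p2^2 + (2)*a'*i^2*mu*p1^2 + (6)*a'*i^2*mu*p1*p2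
        + (3)*a'*i^2*mu*p2^2 + (2)*a'*i^2*p1^2 + (4)*a'*i^2*p1*p2 + (2)*a'*i^2*p2^2
        + i^2*mu^2*p1^2 + i^2*mu^2*p1*p2 + i^2*mu*p1^2 + i^2*mu*p1*p2)*hiso
    + ((-1)*a'^3*i^2*p2^2 + (4)*a'^2*b'*i^2*p3*p4 + (2)*a'^2*b'*i^2*p4^2 + (-1)*a'^2*d*i^2
        + (-2)*a'^2*i^2*mu*p2^2 + (-1)*a'^2*i^2*p1^2 + (-5)*a'^2*i^2*p1*p2 + (-4)*a'^2*i^2*p2^2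
        + (4)*a'*b'*i^2*mu*p3*p4 + (2)*a'*b'*i^2*mu*p4^2 + (2)*a'*b'*i^2*p3*p4
        + (2)*a'*b'*i^2*p4^2 + (-2)*a'*d*i^2 + (-2)*a'*d*i^2*mu + (-1)*a'*i^2*mu^2*p2^2
        + (-2)*a'*i^2*mu*p1^2 + (-6)*a'*i^2*mu*p1*p2 + (-3)*a'*i^2*mu*p2^2 + (-2)*a'*i^2*p1^2
        + (-4)*a'*i^2*p1*p2 + (-2)*a'*i^2*p2^2 + (-1)*d*i^2*mu + (-1)*d*i^2*mu^2
        + (-1)*i^2*mu^2*p1^2 + (-1)*i^2*mu^2*p1*p2 + (-1)*i^2*mu*p1^2 + (-1)*i^2*mu*p1*p2)*hd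
    + ((-2)*a' + (-1)*a'^2 + (4)*a'^2*b'*i*p3*p4 + (2)*a'^2*b'*i*p4^2 + (-1)*a'^2*d*i
        + (-4)*a'^2*i*p1*p2 + (-2)*a'^2*i*p2^2 + (4)*a'*b'*i*mu*p3*p4 + (2)*a'*b'*i*mu*p4^2
        + (2)*a'*b'*i*p3*p4 + (2)*a'*b'*i*p4^2 + (-2)*a'*d*i + (-2)*a'*d*i*mu
        + (-4)*a'*i*mu*p1*p2 + (-2)*a'*i*mu*p2^2 + (-2)*a'*i*p1*p2 + (-2)*a'*i*p2^2
        + (-2)*a'*mu + (-1)*d*i*mu + (-1)*d*i*mu^2 + (-1)*mu + (-1)*mu^2)*hdi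
    + ((-1)*a' + (2)*a'^3*b'*i^2*p1*p2*p3*p4 + a'^3*b'*i^2*p1*p2*p4^2 + a'^3*b'*i^2*p2^2*p3*p4
        + a'^3*b'*i^2*p2^2*p4^2 + (4)*a'^2*b'*i^2*mu*p1*p2*p3*p4 + (2)*a'^2*b'*i^2*mu*p1*p2*p4^2
        + (2)*a'^2*b'*i^2*mu*p2^2*p3*p4 + (2)*a'^2*b'*i^2*mu*p2^2*p4^2
        + (4)*a'^2*b'*i^2*p1*p2*p3*p4 + (3)*a'^2*b'*i^2*p1*p2*p4^2 + (3)*a'^2*b'*i^2*p2^2*p3*p4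
        + (2)*a'^2*b'*i^2*p2^2*p4^2 + (2)*a'^2*b'*i*p3*p4 + a'^2*b'*i*p4^2 + (-2)*a'^2*i*p1*p2
        + (-1)*a'^2*i*p2^2 + (2)*a'*b'*i^2*mu^2*p1*p2*p3*p4 + a'*b'*i^2*mu^2*p1*p2*p4^2
        + a'*b'*i^2*mu^2*p2^2*p3*p4 + a'*b'*i^2*mu^2*p2^2*p4^2 + (2)*a'*b'*i^2*mu*p1*p2*p3*p4
        + (2)*a'*b'*i^2*mu*p1*p2*p4^2 + (2)*a'*b'*i^2*mu*p2^2*p3*p4 + (2)*a'*b'*i^2*mu*p2^2*p4^2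
        + a'*b'*i^2*p1*p2*p3*p4 + a'*b'*i^2*p1*p2*p4^2 + a'*b'*i^2*p2^2*p3*p4
        + a'*b'*i^2*p2^2*p4^2 + (2)*a'*b'*i*mu*p3*p4 + a'*b'*i*mu*p4^2 + a'*b'*i*p3*p4
        + a'*b'*i*p4^2 + (-2)*a'*i*mu*p1*p2 + (-1)*a'*i*mu*p2^2 + (-1)*a'*i*p1*p2
        + (-1)*a'*i*p2^2 + (-1)*mu)*h2

end CharTwoHelpers2


section MainPart
variable {F : Type*} [Field F] [CharP F 2]

lemma mainE (a a' b b' mu x y z w u0 v0 c1 c2 c3 c4 d1 d2 d3 d4 : F)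
    (hS1 : c1^2+c1*c2+a'*c2^2 + b'*(c3^2+c3*c4+a'*c4^2) = mu)
    (hS2 : d1^2+d1*d2+a'*d2^2 + b'*(d3^2+d3*d4+a'*d4^2)
      = mu*(a'*y^2 + b'*(u0^2+u0*v0+a'*v0^2)))
    (hS3 : (c1+d1)^2+(c1+d1)*(c2+d2)+a'*(c2+d2)^2
        + b'*((c3+d3)^2+(c3+d3)*(c4+d4)+a'*(c4+d4)^2)
      = mu*(1 + y + (a'*y^2 + b'*(u0^2+u0*v0+a'*v0^2))))
    (hS4 : x^2+x*y+(a+a')*y^2 + b*(z^2+z*w+a*w^2) + b'*(u0^2+u0*v0+a'*v0^2) = mu) :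
    ∀ lam nu : F,
      (nu*mu)^2
      + mu*((lam+nu*x)^2 + (lam+nu*x)*(nu*y) + a*(nu*y)^2
          + b*((nu*z)^2 + (nu*z)*(nu*w) + a*(nu*w)^2))
      + ((lam*c1+nu*d1)^2 + (lam*c1+nu*d1)*(lam*c2+nu*d2) + a'*(lam*c2+nu*d2)^2
        + b'*((lam*c3+nu*d3)^2 + (lam*c3+nu*d3)*(lam*c4+nu*d4) + a'*(lam*c4+nu*d4)^2)) = 0 := by
  have h2 : (2 : F) = 0 := CharTwo.two_eq_zero
  intro lam nu
  linear_combination (lam^2 + lam*nu)*hS1 + (nu^2 + lam*nu)*hS2 + lam*nu*hS3 + nu^2*mu*hS4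
    + ((-1)*a'*b'*c4^2*lam*nu + (-1)*a'*b'*d4^2*lam*nu + a'*b'*lam*mu*nu*v0^2
      + (-1)*a'*c2^2*lam*nu + (-1)*a'*d2^2*lam*nu + a'*lam*mu*nu*y^2 + (-1)*b'*c3^2*lam*nu
      + (-1)*b'*c3*c4*lam*nu + (-1)*b'*d3^2*lam*nu + (-1)*b'*d3*d4*lam*nu + b'*lam*mu*nu*u0^2
      + b'*lam*mu*nu*u0*v0 + (-1)*c1^2*lam*nu + (-1)*c1*c2*lam*nu + (-1)*d1^2*lam*nu
      + (-1)*d1*d2*lam*nu + lam^2*mu + lam*mu*nu + lam*mu*nu*x + lam*mu*nu*y + mu^2*nu^2)*h2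

lemma mainScalar (a a' b b' mu x y z w u0 v0 c1 c2 c3 c4 d1 d2 d3 d4 : F)
    (hmu : mu ≠ 0)
    (hS1 : c1^2+c1*c2+a'*c2^2 + b'*(c3^2+c3*c4+a'*c4^2) = mu)
    (hS2 : d1^2+d1*d2+a'*d2^2 + b'*(d3^2+d3*d4+a'*d4^2)
      = mu*(a'*y^2 + b'*(u0^2+u0*v0+a'*v0^2)))
    (hS3 : (c1+d1)^2+(c1+d1)*(c2+d2)+a'*(c2+d2)^2
        + b'*((c3+d3)^2+(c3+d3)*(c4+d4)+a'*(c4+d4)^2)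
      = mu*(1 + y + (a'*y^2 + b'*(u0^2+u0*v0+a'*v0^2))))
    (hS4 : x^2+x*y+(a+a')*y^2 + b*(z^2+z*w+a*w^2) + b'*(u0^2+u0*v0+a'*v0^2) = mu) :
    ∃ V1 V2 V3 V4 W1 W2 W3 : F,
      ¬(V1 = 0 ∧ V2 = 0 ∧ V3 = 0 ∧ V4 = 0 ∧ W1 = 0 ∧ W2 = 0 ∧ W3 = 0) ∧
      mu*(V1^2 + V1*V2 + a*V2^2 + b*(V3^2 + V3*V4 + a*V4^2))
        + (W1^2 + b'*(W2^2 + W2*W3 + a'*W3^2)) = 0 := by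
  have h2 : (2 : F) = 0 := CharTwo.two_eq_zero
  have E := mainE a a' b b' mu x y z w u0 v0 c1 c2 c3 c4 d1 d2 d3 d4 hS1 hS2 hS3 hS4
  -- key step when the hyperbolic-plane part of Z vanishes (Zw1 = Zw2 = 0)
  have key : ∀ lam nu : F, lam*c1+nu*d1 = 0 → lam*c2+nu*d2 = 0 →
      mu*((lam+nu*x)^2 + (lam+nu*x)*(nu*y) + a*(nu*y)^2
          + b*((nu*z)^2 + (nu*z)*(nu*w) + a*(nu*w)^2))
      + ((nu*mu)^2 + b'*((lam*c3+nu*d3)^2 + (lam*c3+nu*d3)*(lam*c4+nu*d4)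
          + a'*(lam*c4+nu*d4)^2)) = 0 := by
    intro lam nu hB0 hA
    linear_combination (E lam nu) - ((lam*c1+nu*d1)+(lam*c2+nu*d2))*hB0 - a'*(lam*c2+nu*d2)*hA
  by_cases hδ : c1*d2 - c2*d1 = 0
  · by_cases hc2 : c2 = 0
    · by_cases hc1 : c1 = 0
      · refine ⟨1, 0, 0, 0, 0, c3, c4, fun h => one_ne_zero h.1, ?_⟩
        have := key 1 0 (by linear_combination hc1) (by linear_combination hc2)
        linear_combination this
      · -- c2 = 0, c1 ≠ 0 : take (lam, nu) = (d1, c1)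
        have hB0 : d1*c1+c1*d1 = 0 := by linear_combination c1*d1*h2
        have hA : d1*c2+c1*d2 = 0 := by linear_combination hδ + (2*d1)*hc2
        refine ⟨d1 + c1*x, c1*y, c1*z, c1*w, c1*mu, d1*c3+c1*d3, d1*c4+c1*d4, ?_, ?_⟩
        · intro h
          rcases mul_eq_zero.mp h.2.2.2.2.1 with h' | h'
          · exact hc1 h'
          · exact hmu h'
        · have := key d1 c1 hB0 hA
          linear_combination this
    · -- c2 ≠ 0 : take (lam, nu) = (d2, c2)
      have hA : d2*c2+c2*d2 = 0 := by linear_combination c2*d2*h2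
      have hB0 : d2*c1+c2*d1 = 0 := by linear_combination hδ + c2*d1*h2
      refine ⟨d2 + c2*x, c2*y, c2*z, c2*w, c2*mu, d2*c3+c2*d3, d2*c4+c2*d4, ?_, ?_⟩
      · intro h
        rcases mul_eq_zero.mp h.2.2.2.2.1 with h' | h'
        · exact hc2 h'
        · exact hmu h'
      · have := key d2 c2 hB0 hA
        linear_combination this
  · -- δ ≠ 0
    obtain ⟨i, hdi⟩ : ∃ i : F, (c1*d2 - c2*d1) * i = 1 := ⟨(c1*d2 - c2*d1)⁻¹, mul_inv_cancel₀ hδ⟩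
    have hA : (d2*i)*c2+(c2*i)*d2 = 0 := by linear_combination c2*d2*i*h2
    have hB1 : (d2*i)*c1+(c2*i)*d1 = 1 := by linear_combination hdi + c2*d1*i*h2
    have hrel : mu*(((d2*i)+(c2*i)*x)^2 + ((d2*i)+(c2*i)*x)*((c2*i)*y) + a*((c2*i)*y)^2
          + b*(((c2*i)*z)^2 + ((c2*i)*z)*((c2*i)*w) + a*((c2*i)*w)^2))
        + (((c2*i)*mu+1)^2 + b'*(((d2*i)*c3+(c2*i)*d3)^2
          + ((d2*i)*c3+(c2*i)*d3)*((d2*i)*c4+(c2*i)*d4) + a'*((d2*i)*c4+(c2*i)*d4)^2)) = 0 := by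
      linear_combination (E (d2*i) (c2*i))
        - (((d2*i)*c1+(c2*i)*d1)+1+((d2*i)*c2+(c2*i)*d2))*hB1
        - (a'*((d2*i)*c2+(c2*i)*d2)+1)*hA + mu*(c2*i)*h2
    by_cases hz : ((d2*i)+(c2*i)*x = 0 ∧ (c2*i)*y = 0 ∧ (c2*i)*z = 0 ∧ (c2*i)*w = 0
        ∧ (c2*i)*mu+1 = 0 ∧ (d2*i)*c3+(c2*i)*d3 = 0 ∧ (d2*i)*c4+(c2*i)*d4 = 0)
    · exfalso
      obtain ⟨hV1, hV2, hV3, hV4, hW1, hW2, hW3⟩ := hz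
      have hH2' : ((d1+a'*d2)*i)*c2 + ((c1+a'*c2)*i)*d2 = 1 := by
        linear_combination hdi + (c2*d1+a'*c2*d2)*i*h2
      have hT : ((d2*i)*c1+(c2*i)*d1) * (((d1+a'*d2)*i)*c2 + ((c1+a'*c2)*i)*d2) = 0 := by
        linear_combination (E ((d2*i)+((d1+a'*d2)*i)) ((c2*i)+((c1+a'*c2)*i)))
          - (E ((d1+a'*d2)*i) ((c1+a'*c2)*i)) - (E (d2*i) (c2*i))
          - mu*((c1+a'*c2)*i)*y*hV1 - mu*(((d1+a'*d2)*i)+((c1+a'*c2)*i)*x)*hV2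
          - b*mu*((c1+a'*c2)*i)*w*hV3 - b*mu*((c1+a'*c2)*i)*z*hV4
          - (((d1+a'*d2)*i)*c1+((c1+a'*c2)*i)*d1)*hA
          - b'*(((d1+a'*d2)*i)*c4+((c1+a'*c2)*i)*d4)*hW2
          - b'*(((d1+a'*d2)*i)*c3+((c1+a'*c2)*i)*d3)*hW3
          - (a*b*mu*(c2*i)*((c1+a'*c2)*i)*w^2 + a*mu*(c2*i)*((c1+a'*c2)*i)*y^2
            + a'*b'*c4^2*(d2*i)*((d1+a'*d2)*i) + a'*b'*c4*d4*(d2*i)*((c1+a'*c2)*i)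
            + a'*b'*c4*d4*((d1+a'*d2)*i)*(c2*i) + a'*b'*d4^2*(c2*i)*((c1+a'*c2)*i)
            + a'*c2^2*(d2*i)*((d1+a'*d2)*i) + a'*c2*d2*(d2*i)*((c1+a'*c2)*i)
            + a'*c2*d2*((d1+a'*d2)*i)*(c2*i) + a'*d2^2*(c2*i)*((c1+a'*c2)*i)
            + b*mu*(c2*i)*((c1+a'*c2)*i)*z^2 + b'*c3^2*(d2*i)*((d1+a'*d2)*i)
            + b'*c3*d3*(d2*i)*((c1+a'*c2)*i) + b'*c3*d3*((d1+a'*d2)*i)*(c2*i)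
            + b'*d3^2*(c2*i)*((c1+a'*c2)*i) + c1^2*(d2*i)*((d1+a'*d2)*i)
            + c1*d1*(d2*i)*((c1+a'*c2)*i) + c1*d1*((d1+a'*d2)*i)*(c2*i)
            + d1^2*(c2*i)*((c1+a'*c2)*i) + (d2*i)*((d1+a'*d2)*i)*mu
            + (d2*i)*mu*((c1+a'*c2)*i)*x + ((d1+a'*d2)*i)*mu*(c2*i)*x
            + mu^2*(c2*i)*((c1+a'*c2)*i) + mu*(c2*i)*((c1+a'*c2)*i)*x^2)*h2
      have hzero : ((d1+a'*d2)*i)*c2 + ((c1+a'*c2)*i)*d2 = 0 := by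
        linear_combination hT - (((d1+a'*d2)*i)*c2 + ((c1+a'*c2)*i)*d2)*hB1
      exact one_ne_zero (hH2'.symm.trans hzero)
    · exact ⟨(d2*i)+(c2*i)*x, (c2*i)*y, (c2*i)*z, (c2*i)*w, (c2*i)*mu+1,
        (d2*i)*c3+(c2*i)*d3, (d2*i)*c4+(c2*i)*d4, hz, hrel⟩

end MainPart


set_option maxHeartbeats 1000000 in
/-- over a field of characteristic 2, with `n = [1,a] ⊥ b·[1,a]` the norm form
of `[a,b)`, `n' = [1,a'] ⊥ b'·[1,a']` the norm form of `[a',b')`, and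
`n'⁰ = ⟨1⟩ ⊥ b'·[1,a']` its restriction to pure quaternions: if `μ ∈ F^×` is represented
by the Albert form `[1,a+a'] ⊥ b·[1,a] ⊥ b'·[1,a']` and `n' ⊥ μ·n'` is hyperbolic
(`≃ 4×ℍ`), then some `c ∈ F^×` is represented by both `μ·n` and `n'⁰`. -/
theorem stmt12 (F : Type*) [Field F] [CharP F 2] (a a' b b' : F)
    (hb : b ≠ 0) (hb' : b' ≠ 0) (mu : F) (hmu : mu ≠ 0)
    (hrep : ∃ v : (F × F) × ((F × F) × (F × F)),
      ((binQF F 1 (a + a')).prod ((b • binQF F 1 a).prod (b' • binQF F 1 a'))) v = mu)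
    (hhyp : QuadraticMap.Equivalent
      (((binQF F 1 a').prod (b' • binQF F 1 a')).prod
        (mu • ((binQF F 1 a').prod (b' • binQF F 1 a'))))
      (QuadraticMap.pi (fun _ : Fin 4 => binQF F 0 0))) :
    ∃ c : F, c ≠ 0 ∧
      (∃ v : (F × F) × (F × F), (mu • ((binQF F 1 a).prod (b • binQF F 1 a))) v = c) ∧
      (∃ w : F × (F × F),
        ((QuadraticMap.sq : QuadraticForm F F).prod (b' • binQF F 1 a')) w = c) := by
  classical
  have h2 : (2 : F) = 0 := CharTwo.two_eq_zero
  obtain ⟨⟨⟨x, y⟩, ⟨⟨z, w⟩, ⟨u0, v0⟩⟩⟩, hAl⟩ := hrep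
  rw [Alb_apply] at hAl
  have hS4 : x^2+x*y+(a+a')*y^2 + b*(z^2+z*w+a*w^2) + b'*(u0^2+u0*v0+a'*v0^2) = mu := by
    linear_combination hAl
  by_cases haniso : ∀ p : (F × F) × (F × F),
      ((binQF F 1 a').prod (b' • binQF F 1 a')) p = 0 → p = 0
  · -- n' anisotropic : extract a similarity σ with n'(σ p) = μ · n'(p)
    set n' := (binQF F 1 a').prod (b' • binQF F 1 a') with hn'
    obtain ⟨iso⟩ := hhyp
    set f := iso.toLinearEquiv with hf
    let φ : (Fin 4 → F) →ₗ[F] (Fin 4 → F × F) :=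
      LinearMap.pi (fun i => (LinearMap.inl F F F).comp (LinearMap.proj i))
    have hφinj : Function.Injective φ := by
      intro g g' h
      funext i
      have := congrFun h i
      simpa [φ, Prod.ext_iff] using this
    have hφ0 : ∀ g, (QuadraticMap.pi (fun _ : Fin 4 => binQF F 0 0)) (φ g) = 0 := by
      intro g
      rw [QuadraticMap.pi_apply]
      apply Finset.sum_eq_zero
      intro i _
      simp [φ, binQF_apply]
    let ι : (Fin 4 → F) →ₗ[F] ((F × F) × (F × F)) × ((F × F) × (F × F)) :=
      (f.symm : (Fin 4 → F × F) ≃ₗ[F] _).toLinearMap.comp φ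
    have hιinj : Function.Injective ι := f.symm.injective.comp hφinj
    have hι0 : ∀ g, n' (ι g).1 + mu * n' (ι g).2 = 0 := by
      intro g
      have h1 := iso.symm.map_app (φ g)
      rw [hφ0 g] at h1
      have h2' : (n'.prod (mu • n')) (ι g) = 0 := h1
      simpa [QuadraticMap.prod_apply] using h2'
    let K : (Fin 4 → F) →ₗ[F] ((F × F) × (F × F)) := (LinearMap.snd F _ _).comp ι
    have hKinj : Function.Injective K := by
      rw [← LinearMap.ker_eq_bot] at hιinj ⊢
      rw [Submodule.eq_bot_iff] at hιinj ⊢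
      intro g hg
      apply hιinj
      have hg2 : (ι g).2 = 0 := hg
      have h0 := hι0 g
      rw [hg2] at h0
      simp only [map_zero, mul_zero, add_zero] at h0
      have h1 : (ι g).1 = 0 := haniso _ h0
      simp only [LinearMap.mem_ker]
      exact Prod.ext h1 hg2
    have hfr : Module.finrank F (Fin 4 → F) = Module.finrank F ((F × F) × (F × F)) := by
      simp [Module.finrank_pi, Module.finrank_prod]
    have hKsurj : Function.Surjective K :=
      (LinearMap.injective_iff_surjective_of_finrank_eq_finrank hfr).mp hKinj
    let eK := LinearEquiv.ofBijective K ⟨hKinj, hKsurj⟩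
    set σ : ((F × F) × (F × F)) →ₗ[F] ((F × F) × (F × F)) :=
      (LinearMap.fst F _ _).comp (ι.comp (eK.symm : _ →ₗ[F] _)) with hσdef
    have hσ : ∀ p, n' (σ p) = mu * n' p := by
      intro p
      have h1 : (ι (eK.symm p)).2 = p := eK.apply_symm_apply p
      have h0 := hι0 (eK.symm p)
      rw [h1] at h0
      simp only [hσdef, LinearMap.coe_comp, Function.comp_apply, LinearEquiv.coe_coe,
        LinearMap.fst_apply]
      linear_combination h0 - mu * n' p * h2
    -- scalarize
    set C := σ (((1:F),(0:F)),((0:F),(0:F))) with hCdef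
    set D := σ (((0:F),y),(u0,v0)) with hDdef
    have hS1 : C.1.1^2 + C.1.1*C.1.2 + a'*C.1.2^2
        + b'*(C.2.1^2 + C.2.1*C.2.2 + a'*C.2.2^2) = mu := by
      have h := hσ (((1:F),(0:F)),((0:F),(0:F)))
      rw [← hCdef, hn', Qn_apply, Qn_apply] at h
      linear_combination h
    have hS2 : D.1.1^2 + D.1.1*D.1.2 + a'*D.1.2^2
        + b'*(D.2.1^2 + D.2.1*D.2.2 + a'*D.2.2^2)
        = mu*(a'*y^2 + b'*(u0^2+u0*v0+a'*v0^2)) := by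
      have h := hσ (((0:F),y),(u0,v0))
      rw [← hDdef, hn', Qn_apply, Qn_apply] at h
      linear_combination h
    have hS3 : (C.1.1+D.1.1)^2 + (C.1.1+D.1.1)*(C.1.2+D.1.2) + a'*(C.1.2+D.1.2)^2
        + b'*((C.2.1+D.2.1)^2 + (C.2.1+D.2.1)*(C.2.2+D.2.2) + a'*(C.2.2+D.2.2)^2)
        = mu*(1 + y + (a'*y^2 + b'*(u0^2+u0*v0+a'*v0^2))) := by
      have h := hσ ((((1:F),(0:F)),((0:F),(0:F))) + (((0:F),y),(u0,v0)))
      rw [map_add, ← hCdef, ← hDdef, hn', Qn_apply, Qn_apply] at h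
      simp only [Prod.fst_add, Prod.snd_add] at h
      linear_combination h
    obtain ⟨V1, V2, V3, V4, W1, W2, W3, hnz, hrel⟩ :=
      mainScalar a a' b b' mu x y z w u0 v0 C.1.1 C.1.2 C.2.1 C.2.2 D.1.1 D.1.2 D.2.1 D.2.2
        hmu hS1 hS2 hS3 hS4
    by_cases hc0 : W1^2 + b'*(W2^2 + W2*W3 + a'*W3^2) = 0
    · have hVm : mu*(V1^2 + V1*V2 + a*V2^2 + b*(V3^2 + V3*V4 + a*V4^2)) = 0 := by
        linear_combination hrel - hc0
      have hV0 : V1^2 + V1*V2 + a*V2^2 + b*(V3^2 + V3*V4 + a*V4^2) = 0 := by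
        rcases mul_eq_zero.mp hVm with h | h
        · exact absurd h hmu
        · exact h
      by_cases hV : V1 = 0 ∧ V2 = 0 ∧ V3 = 0 ∧ V4 = 0
      · have hW : ¬(W1 = 0 ∧ W2 = 0 ∧ W3 = 0) := fun hW =>
          hnz ⟨hV.1, hV.2.1, hV.2.2.1, hV.2.2.2, hW.1, hW.2.1, hW.2.2⟩
        obtain ⟨e1, e2, e3, he⟩ := univQ0S a' b' hb' W1 W2 W3 hW hc0 mu
        refine ⟨mu, hmu, ⟨(((1:F),(0:F)),((0:F),(0:F))), ?_⟩, ⟨(e1,(e2,e3)), ?_⟩⟩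
        · rw [smulQF_apply, Qn_apply]
          ring
        · rw [Q0_apply]
          linear_combination he
      · obtain ⟨q1, q2, q3, q4, hq⟩ := univQnS a b hb V1 V2 V3 V4 hV hV0 mu⁻¹
        refine ⟨1, one_ne_zero, ⟨((q1,q2),(q3,q4)), ?_⟩, ⟨((1:F),((0:F),(0:F))), ?_⟩⟩
        · rw [smulQF_apply, Qn_apply]
          rw [show ((((q1,q2),(q3,q4)) : (F×F)×(F×F)).1.1 ^ 2
              + ((q1,q2),(q3,q4)).1.1 * (((q1,q2),(q3,q4)) : (F×F)×(F×F)).1.2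
              + a * (((q1,q2),(q3,q4)) : (F×F)×(F×F)).1.2 ^ 2)
              + b * ((((q1,q2),(q3,q4)) : (F×F)×(F×F)).2.1 ^ 2
              + (((q1,q2),(q3,q4)) : (F×F)×(F×F)).2.1 * (((q1,q2),(q3,q4)) : (F×F)×(F×F)).2.2
              + a * (((q1,q2),(q3,q4)) : (F×F)×(F×F)).2.2 ^ 2) = mu⁻¹ from by
            linear_combination hq]
          exact mul_inv_cancel₀ hmu
        · rw [Q0_apply]
          norm_num
    · refine ⟨W1^2 + b'*(W2^2 + W2*W3 + a'*W3^2), hc0,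
        ⟨((V1,V2),(V3,V4)), ?_⟩, ⟨(W1,(W2,W3)), ?_⟩⟩
      · rw [smulQF_apply, Qn_apply]
        linear_combination hrel - (W1^2 + b'*(W2^2 + W2*W3 + a'*W3^2))*h2
      · rw [Q0_apply]
  · -- n' isotropic
    push_neg at haniso
    obtain ⟨⟨⟨p1, p2⟩, ⟨p3, p4⟩⟩, hp0, hpne⟩ := haniso
    rw [Qn_apply] at hp0
    have hnz : ¬(p1 = 0 ∧ p2 = 0 ∧ p3 = 0 ∧ p4 = 0) := by
      intro ⟨e1, e2, e3, e4⟩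
      exact hpne (by simp [Prod.ext_iff, e1, e2, e3, e4])
    obtain ⟨s, u, v, hsuv⟩ := casePmain a' b' mu hb' p1 p2 p3 p4 hnz (by linear_combination hp0)
    refine ⟨mu, hmu, ⟨(((1:F),(0:F)),((0:F),(0:F))), ?_⟩, ⟨(s,(u,v)), ?_⟩⟩
    · rw [smulQF_apply, Qn_apply]
      ring
    · rw [Q0_apply]
      linear_combination hsuv
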